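/- For every τ in the upper half-plane ℍ, with q := e^{2πiτ} and ζ₆ := e^{iπ/3}, the identity −4(2πiτ)³ + ∑_{n≥1} ( ∑_{m|n} ψ(m)/m³ ) qⁿ = −48·( 24·𝓛i₃(τ,ζ₆) + 21·𝓛i₃(τ,ζ₆²) + 8·𝓛i₃(τ,−1) + 7·𝓛i₃(τ,1) ) + 80π³iτ − 16ζ(3) holds, where all series converge absolutely. -/

import Mathlib

/-- The even mod-6 character `ψ` with `ψ(1)=ψ(5)=−48`, `ψ(2)=ψ(4)=720`,
`ψ(3)=384`, `ψ(6)=−5760` (6-periodic). -/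
def psi (n : ℕ) : ℤ :=
  if n % 6 = 1 then -48 else if n % 6 = 2 then 720 else if n % 6 = 3 then 384
  else if n % 6 = 4 then 720 else if n % 6 = 5 then -48 else -5760

/-- The trilogarithm `Li₃(z) = ∑_{k≥1} z^k/k³`. -/
noncomputable def Li3 (z : ℂ) : ℂ := ∑' k : ℕ, z^(k+1) / ((k:ℂ)+1)^3

/-- The Beilinson–Levin elliptic trilogarithm `𝓛i₃(τ,z)` for `τ ∈ ℍ` and `z`
on the unit circle, with `q = e^{2πiτ}` and principal branch logarithms. -/
noncomputable def eLi3 (τ z : ℂ) : ℂ :=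
  Li3 z +
    (∑' n : ℕ, (Li3 (Complex.exp (2*Real.pi*Complex.I*τ)^(n+1) * z) +
        Li3 (Complex.exp (2*Real.pi*Complex.I*τ)^(n+1) * z⁻¹))) -
    (-(Complex.log z)^3/12 + (2*Real.pi*Complex.I*τ) * (Complex.log z)^2/24
      - (2*Real.pi*Complex.I*τ)^3/720)

/-- `ζ(3) = ∑_{k≥1} 1/k³`. -/
noncomputable def zeta3 : ℝ := ∑' k : ℕ, 1 / ((k:ℝ)+1)^3

open Complex

noncomputable def om : ℂ := Complex.exp (Real.pi * Complex.I / 3)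

lemma om_cube : om ^ 3 = -1 := by
  rw [om, ← Complex.exp_nat_mul]
  rw [show (3:ℕ) * (Real.pi * Complex.I / 3) = Real.pi * Complex.I by push_cast; ring]
  exact Complex.exp_pi_mul_I

lemma om_ne_neg_one : om ≠ -1 := by
  intro h
  have h1 : om.im = Real.sin (Real.pi / 3) := by
    rw [om, show Real.pi * Complex.I / 3 = ((Real.pi/3 : ℝ):ℂ) * Complex.I by push_cast; ring,
      Complex.exp_ofReal_mul_I_im]
  rw [h] at h1
  simp [Real.sin_pi_div_three] at h1
  have := Real.sqrt_pos.mpr (by norm_num : (0:ℝ) < 3)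
  linarith [h1]

lemma om_sq : om ^ 2 = om - 1 := by
  have h : (om + 1) * (om ^ 2 - om + 1) = 0 := by linear_combination om_cube
  rcases mul_eq_zero.mp h with h1 | h2
  · exact absurd (by linear_combination h1) om_ne_neg_one
  · linear_combination h2

lemma om_pow3 : om ^ 3 = -1 := om_cube
lemma om_pow4 : om ^ 4 = -om := by
  calc om^4 = om^3 * om := by ring
  _ = -om := by rw [om_cube]; ring
lemma om_pow5 : om ^ 5 = 1 - om := by
  calc om^5 = om^3 * om^2 := by ring
  _ = 1 - om := by rw [om_cube, om_sq]; ring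

lemma om_pow_six : om ^ 6 = 1 := by
  calc om^6 = (om^3)^2 := by ring
  _ = 1 := by rw [om_cube]; ring

lemma om_pow_mod (a : ℕ) : om ^ a = om ^ (a % 6) := by
  conv_lhs => rw [← Nat.div_add_mod a 6]
  rw [pow_add, pow_mul, om_pow_six, one_pow, one_mul]

lemma om_inv : om⁻¹ = om ^ 5 :=
  inv_eq_of_mul_eq_one_right (by linear_combination om_pow_six)

lemma om_sq_inv : (om ^ 2)⁻¹ = om ^ 4 :=
  inv_eq_of_mul_eq_one_right (by linear_combination om_pow_six)

lemma psi_eq (m : ℕ) : (psi m : ℂ) =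
    -48 * (24*(om^m + (om⁻¹)^m) + 21*((om^2)^m + ((om^2)⁻¹)^m)
      + 8*((-1:ℂ)^m + ((-1:ℂ)⁻¹)^m) + 7*((1:ℂ)^m + ((1:ℂ)⁻¹)^m)) := by
  have hneg : (-1:ℂ)^m = om ^ (3*m) := by rw [pow_mul, om_cube]
  rw [om_inv, om_sq_inv, inv_neg, inv_one, ← pow_mul, ← pow_mul, ← pow_mul, one_pow, hneg]
  rw [om_pow_mod m, om_pow_mod (5*m), om_pow_mod (2*m), om_pow_mod (4*m), om_pow_mod (3*m)]
  have h6 : m % 6 = 0 ∨ m % 6 = 1 ∨ m % 6 = 2 ∨ m % 6 = 3 ∨ m % 6 = 4 ∨ m % 6 = 5 := by omega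
  rcases h6 with h | h | h | h | h | h <;>
    rw [show (5*m) % 6 = (5 * (m%6)) % 6 by omega, show (2*m) % 6 = (2 * (m%6)) % 6 by omega,
        show (4*m) % 6 = (4 * (m%6)) % 6 by omega, show (3*m) % 6 = (3 * (m%6)) % 6 by omega,
        h] <;>
    simp only [psi, h] <;> norm_num <;>
    simp only [om_pow5, om_pow4, om_pow3, om_sq] <;> ring



lemma summable_zeta3 : Summable (fun k : ℕ => 1 / ((k:ℝ)+1)^3) := by
  have h : Summable (fun n : ℕ => 1 / (n:ℝ)^3) := Real.summable_one_div_nat_pow.mpr (by norm_num)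
  have := (summable_nat_add_iff 1).mpr h
  refine this.congr fun k => ?_
  push_cast; ring_nf

lemma hasSum_zeta3 : HasSum (fun k : ℕ => 1 / ((k:ℝ)+1)^3) zeta3 := summable_zeta3.hasSum

lemma hasSum_shift {M : Type*} [AddCommGroup M] [TopologicalSpace M] [IsTopologicalAddGroup M]
    {f : ℕ → M} {a : M} (h : HasSum f a) (h0 : f 0 = 0) : HasSum (fun n => f (n+1)) a := by
  refine (hasSum_nat_add_iff 1).mpr ?_
  simpa [h0] using h

lemma bern3 (x : ℝ) :
    ((Polynomial.bernoulli 3).map (algebraMap ℚ ℝ)).eval x = x^3 - 3/2*x^2 + 1/2*x := by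
  have h3 : bernoulli 3 = 0 := by
    rw [bernoulli_eq_bernoulli'_of_ne_one (by norm_num), bernoulli'_three]
  simp [Polynomial.bernoulli, Finset.sum_range_succ, bernoulli_zero, bernoulli_one, h3,
    bernoulli_eq_bernoulli'_of_ne_one, bernoulli'_two]
  ring

lemma hasSum_sin_gen {x : ℝ} (hx : x ∈ Set.Icc (0:ℝ) 1) :
    HasSum (fun k : ℕ => Real.sin (2*Real.pi*(k+1)*x) / ((k:ℝ)+1)^3)
      (2*Real.pi^3/3 * (x^3 - 3/2*x^2 + 1/2*x)) := by
  have h := hasSum_one_div_nat_pow_mul_sin (k := 1) one_ne_zero hx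
  rw [bern3] at h
  have h' := hasSum_shift h (by simp)
  have hfun : (fun n : ℕ => 1 / ((n+1:ℕ):ℝ) ^ (2*1+1) * Real.sin (2 * Real.pi * ((n+1:ℕ):ℝ) * x))
      = fun k : ℕ => Real.sin (2*Real.pi*(k+1)*x) / ((k:ℝ)+1)^3 := by
    funext k; push_cast; ring
  have hval : (-1:ℝ) ^ (1 + 1) * (2 * Real.pi) ^ (2 * 1 + 1) / 2 / ((2 * 1 + 1).factorial : ℝ)
      = 2*Real.pi^3/3 := by
    simp [Nat.factorial]; ring
  rw [hfun, hval] at h'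
  exact h'

lemma cos_comb (m : ℕ) :
    24 * Real.cos (2*Real.pi*m*(1/6)) + 21 * Real.cos (2*Real.pi*m*(1/3)) + 8*(-1:ℝ)^m + 7 =
    1/2 - (if 2 ∣ m then (8:ℝ) else 0) - (if 3 ∣ m then (9/2:ℝ) else 0)
      + (if 6 ∣ m then (72:ℝ) else 0) := by
  set r := m % 6 with hrdef
  set t := m / 6 with htdef
  have hm : m = 6*t + r := by omega
  have hr : r < 6 := by omega
  have h1 : 2*Real.pi*(m:ℝ)*(1/6) = 2*Real.pi*(r:ℝ)*(1/6) + (t:ℕ)*(2*Real.pi) := by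
    rw [hm]; push_cast; ring
  have h2 : 2*Real.pi*(m:ℝ)*(1/3) = 2*Real.pi*(r:ℝ)*(1/3) + ((2*t:ℕ))*(2*Real.pi) := by
    rw [hm]; push_cast; ring
  have hneg : (-1:ℝ)^m = (-1)^r := by
    rw [hm, pow_add, pow_mul]; norm_num
  rw [h1, h2, Real.cos_add_nat_mul_two_pi, Real.cos_add_nat_mul_two_pi, hneg]
  interval_cases r
  · rw [if_pos (by omega), if_pos (by omega), if_pos (by omega)]
    norm_num
  · rw [if_neg (by omega), if_neg (by omega), if_neg (by omega)]
    rw [show 2*Real.pi*((1:ℕ):ℝ)*(1/6) = Real.pi/3 by push_cast; ring,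
        show 2*Real.pi*((1:ℕ):ℝ)*(1/3) = Real.pi - Real.pi/3 by push_cast; ring,
        Real.cos_pi_sub, Real.cos_pi_div_three]
    norm_num
  · rw [if_pos (by omega), if_neg (by omega), if_neg (by omega)]
    rw [show 2*Real.pi*((2:ℕ):ℝ)*(1/6) = Real.pi - Real.pi/3 by push_cast; ring,
        show 2*Real.pi*((2:ℕ):ℝ)*(1/3) = 2*Real.pi - (Real.pi - Real.pi/3) by push_cast; ring]
    simp only [Real.cos_two_pi_sub, Real.cos_pi_sub, Real.cos_pi_div_three]
    norm_num
  · rw [if_neg (by omega), if_pos (by omega), if_neg (by omega)]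
    rw [show 2*Real.pi*((3:ℕ):ℝ)*(1/6) = Real.pi by push_cast; ring,
        show 2*Real.pi*((3:ℕ):ℝ)*(1/3) = 2*Real.pi by push_cast; ring,
        Real.cos_pi, Real.cos_two_pi]
    norm_num
  · rw [if_pos (by omega), if_neg (by omega), if_neg (by omega)]
    rw [show 2*Real.pi*((4:ℕ):ℝ)*(1/6) = 2*Real.pi - (Real.pi - Real.pi/3) by push_cast; ring,
        show 2*Real.pi*((4:ℕ):ℝ)*(1/3) = (Real.pi - Real.pi/3) + 2*Real.pi by push_cast; ring]
    simp only [Real.cos_add_two_pi, Real.cos_two_pi_sub, Real.cos_pi_sub, Real.cos_pi_div_three]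
    norm_num
  · rw [if_neg (by omega), if_neg (by omega), if_neg (by omega)]
    rw [show 2*Real.pi*((5:ℕ):ℝ)*(1/6) = 2*Real.pi - Real.pi/3 by push_cast; ring,
        show 2*Real.pi*((5:ℕ):ℝ)*(1/3) = (2*Real.pi - (Real.pi - Real.pi/3)) + 2*Real.pi by push_cast; ring]
    simp only [Real.cos_add_two_pi, Real.cos_two_pi_sub, Real.cos_pi_sub, Real.cos_pi_div_three]
    norm_num


lemma hasSum_chi (d : ℕ) (hd : 0 < d) :
    HasSum (fun k : ℕ => if d ∣ (k+1) then (1:ℝ)/((k:ℝ)+1)^3 else 0) (zeta3/(d:ℝ)^3) := by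
  have hinj : Function.Injective (fun j : ℕ => d*(j+1) - 1) := by
    intro a b hab
    simp only at hab
    have h1 : d*(a+1) = d*(b+1) := by
      have ha : 1 ≤ d*(a+1) := Nat.one_le_iff_ne_zero.mpr (by positivity)
      have hb : 1 ≤ d*(b+1) := Nat.one_le_iff_ne_zero.mpr (by positivity)
      omega
    have := Nat.eq_of_mul_eq_mul_left hd h1
    omega
  refine (Function.Injective.hasSum_iff hinj ?_).mp ?_
  · intro x hx
    rw [if_neg]
    rintro ⟨c, hc⟩
    rcases Nat.eq_zero_or_pos c with rfl | hcpos
    · simp at hc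
    · refine hx ⟨c - 1, ?_⟩
      simp only
      rw [show c - 1 + 1 = c by omega, ← hc]
      omega
  · have hfe : ((fun k : ℕ => if d ∣ (k+1) then (1:ℝ)/((k:ℝ)+1)^3 else 0)
        ∘ (fun j : ℕ => d*(j+1) - 1)) = fun j : ℕ => 1/(d:ℝ)^3 * (1/((j:ℝ)+1)^3) := by
      funext j
      have hpos : 1 ≤ d*(j+1) := Nat.one_le_iff_ne_zero.mpr (by positivity)
      simp only [Function.comp_apply]
      rw [show d*(j+1) - 1 + 1 = d*(j+1) by omega, if_pos ⟨j+1, rfl⟩]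
      have hcast : ((d*(j+1) - 1 : ℕ) : ℝ) + 1 = (d:ℝ)*((j:ℝ)+1) := by
        have h2 : ((d*(j+1) - 1 : ℕ) : ℝ) = ((d*(j+1) : ℕ) : ℝ) - 1 := by
          rw [Nat.cast_sub hpos]; norm_num
        rw [h2]; push_cast; ring
      rw [hcast]
      have hd0 : (d:ℝ) ≠ 0 := Nat.cast_ne_zero.mpr hd.ne'
      have hj : ((j:ℝ)+1) ≠ 0 := by positivity
      field_simp
    rw [hfe]
    have h := hasSum_zeta3.mul_left (1/(d:ℝ)^3)
    rw [show 1/(d:ℝ)^3 * zeta3 = zeta3/(d:ℝ)^3 by ring] at h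
    exact h


lemma summable_Li3 {z : ℂ} (hz : ‖z‖ ≤ 1) :
    Summable (fun k : ℕ => z^(k+1) / ((k:ℂ)+1)^3) := by
  refine Summable.of_norm_bounded (g := fun k => 1/((k:ℝ)+1)^3) summable_zeta3 fun k => ?_
  have h1 : ‖(k:ℂ)+1‖ = (k:ℝ)+1 := by
    rw [show (k:ℂ)+1 = ((k+1:ℕ):ℂ) by push_cast; ring, Complex.norm_natCast]
    push_cast; ring
  rw [norm_div, norm_pow, norm_pow, h1]
  have h2 : ‖z‖^(k+1) ≤ 1 := pow_le_one₀ (norm_nonneg z) hz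
  have h3 : (0:ℝ) < ((k:ℝ)+1)^3 := by positivity
  rw [div_le_div_iff₀ h3 h3]
  nlinarith

lemma hasSum_Li3 {z : ℂ} (hz : ‖z‖ ≤ 1) :
    HasSum (fun k : ℕ => z^(k+1) / ((k:ℂ)+1)^3) (Li3 z) := (summable_Li3 hz).hasSum

lemma norm_om : ‖om‖ = 1 := by
  rw [om, Complex.norm_exp]
  simp

lemma om_pow_exp (k : ℕ) :
    om ^ (k+1) = Complex.cos ↑(2*Real.pi*((k:ℝ)+1)*(1/6)) +
      Complex.sin ↑(2*Real.pi*((k:ℝ)+1)*(1/6)) * I := by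
  rw [om, ← Complex.exp_nat_mul,
    show ((k+1:ℕ):ℂ) * (Real.pi * I / 3) = ↑(2*Real.pi*((k:ℝ)+1)*(1/6)) * I by push_cast; ring,
    Complex.exp_mul_I]

lemma om_sq_pow_exp (k : ℕ) :
    (om ^ 2) ^ (k+1) = Complex.cos ↑(2*Real.pi*((k:ℝ)+1)*(1/3)) +
      Complex.sin ↑(2*Real.pi*((k:ℝ)+1)*(1/3)) * I := by
  rw [← pow_mul, om, ← Complex.exp_nat_mul,
    show ((2*(k+1):ℕ):ℂ) * (Real.pi * I / 3) = ↑(2*Real.pi*((k:ℝ)+1)*(1/3)) * I by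
      push_cast; ring,
    Complex.exp_mul_I]

lemma constant_sum : 24 * Li3 om + 21 * Li3 (om^2) + 8 * Li3 (-1) + 7 * Li3 1
    = -((zeta3:ℝ):ℂ)/3 + 34*((Real.pi:ℝ):ℂ)^3*Complex.I/27 := by
  have hom : ‖om‖ ≤ 1 := le_of_eq norm_om
  have hom2 : ‖om^2‖ ≤ 1 := by rw [norm_pow, norm_om]; norm_num
  have hm1 : ‖(-1:ℂ)‖ ≤ 1 := by simp
  have h1' : ‖(1:ℂ)‖ ≤ 1 := by simp
  have hS1 := hasSum_Li3 hom
  have hS2 := hasSum_Li3 hom2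
  have hS3 := hasSum_Li3 hm1
  have hS4 := hasSum_Li3 h1'
  have Hcombo := ((hS1.mul_left 24).add (hS2.mul_left 21)).add
    ((hS3.mul_left 8).add (hS4.mul_left 7))
  -- real parts
  have hu0 := (((hasSum_zeta3.mul_left (1/2)).sub ((hasSum_chi 2 (by norm_num)).mul_left 8)).sub
      ((hasSum_chi 3 (by norm_num)).mul_left (9/2))).add ((hasSum_chi 6 (by norm_num)).mul_left 72)
  have huval : 1/2*zeta3 - 8*(zeta3/((2:ℕ):ℝ)^3) - 9/2*(zeta3/((3:ℕ):ℝ)^3) + 72*(zeta3/((6:ℕ):ℝ)^3)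
      = -zeta3/3 := by push_cast; ring
  rw [huval] at hu0
  have hu : HasSum (fun k : ℕ => (24*Real.cos (2*Real.pi*((k:ℝ)+1)*(1/6))
      + 21*Real.cos (2*Real.pi*((k:ℝ)+1)*(1/3)) + 8*(-1:ℝ)^(k+1) + 7)/((k:ℝ)+1)^3)
      (-zeta3/3) := by
    refine hu0.congr_fun fun k => ?_
    have h := cos_comb (k+1)
    push_cast at h
    rw [h]
    split_ifs <;> ring
  -- imaginary parts
  have hv0 := ((hasSum_sin_gen (x := 1/6) (by norm_num)).mul_left 24).add
    ((hasSum_sin_gen (x := 1/3) (by norm_num)).mul_left 21)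
  have hvval : 24*(2*Real.pi^3/3 * ((1/6:ℝ)^3 - 3/2*(1/6)^2 + 1/2*(1/6)))
      + 21*(2*Real.pi^3/3 * ((1/3:ℝ)^3 - 3/2*(1/3)^2 + 1/2*(1/3))) = 34*Real.pi^3/27 := by
    ring
  rw [hvval] at hv0
  -- combine to complex
  have hC := (hasSum_ofReal.mpr hu).add ((hasSum_ofReal.mpr hv0).mul_right I)
  have hfe : ∀ k : ℕ, 24 * (om^(k+1)/((k:ℂ)+1)^3) + 21 * ((om^2)^(k+1)/((k:ℂ)+1)^3)
      + (8 * ((-1:ℂ)^(k+1)/((k:ℂ)+1)^3) + 7 * ((1:ℂ)^(k+1)/((k:ℂ)+1)^3))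
      = (((24*Real.cos (2*Real.pi*((k:ℝ)+1)*(1/6))
        + 21*Real.cos (2*Real.pi*((k:ℝ)+1)*(1/3)) + 8*(-1:ℝ)^(k+1) + 7)/((k:ℝ)+1)^3 : ℝ) : ℂ)
      + (((24*(Real.sin (2*Real.pi*((k:ℝ)+1)*(1/6))/((k:ℝ)+1)^3)
        + 21*(Real.sin (2*Real.pi*((k:ℝ)+1)*(1/3))/((k:ℝ)+1)^3) : ℝ)) : ℂ) * I := by
    intro k
    rw [om_pow_exp k, om_sq_pow_exp k, one_pow]
    push_cast [Complex.ofReal_cos, Complex.ofReal_sin]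
    ring
  have Hcombo2 : HasSum (fun k : ℕ => 24 * (om^(k+1)/((k:ℂ)+1)^3)
      + 21 * ((om^2)^(k+1)/((k:ℂ)+1)^3)
      + (8 * ((-1:ℂ)^(k+1)/((k:ℂ)+1)^3) + 7 * ((1:ℂ)^(k+1)/((k:ℂ)+1)^3)))
      (((-zeta3/3 : ℝ) : ℂ) + ((34*Real.pi^3/27 : ℝ) : ℂ) * I) := hC.congr_fun fun k => hfe k
  rw [show (24 : ℂ) * Li3 om + 21 * Li3 (om^2) + 8 * Li3 (-1) + 7 * Li3 1
      = 24 * Li3 om + 21 * Li3 (om^2) + (8 * Li3 (-1) + 7 * Li3 1) by ring,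
    Hcombo.unique Hcombo2]
  push_cast
  ring

section qseries
variable {q : ℂ} (hq : ‖q‖ < 1)

lemma summable_geom_shift (hq : ‖q‖ < 1) : Summable (fun n : ℕ => ‖q‖^(n+1)) := by
  have h := (summable_geometric_of_lt_one (norm_nonneg q) hq).mul_left ‖q‖
  refine h.congr fun n => ?_
  rw [pow_succ]; ring

lemma summable_F (hq : ‖q‖ < 1) {z : ℂ} (hz : ‖z‖ = 1) :
    Summable (fun p : ℕ×ℕ => z^(p.2+1) * q^((p.1+1)*(p.2+1)) / ((p.2:ℂ)+1)^3) := by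
  have hg := Summable.mul_of_nonneg (f := fun n : ℕ => ‖q‖^(n+1)) (g := fun k : ℕ => ‖q‖^k)
      (summable_geom_shift hq) (summable_geometric_of_lt_one (norm_nonneg q) hq)
      (fun n => pow_nonneg (norm_nonneg q) _) (fun n => pow_nonneg (norm_nonneg q) _)
  refine Summable.of_norm_bounded hg fun p => ?_
  obtain ⟨n, k⟩ := p
  simp only
  have hden : ‖((k:ℂ)+1)^3‖ = ((k:ℝ)+1)^3 := by
    rw [norm_pow, show (k:ℂ)+1 = ((k+1:ℕ):ℂ) by push_cast; ring, Complex.norm_natCast]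
    push_cast; ring
  rw [norm_div, norm_mul, norm_pow, norm_pow, hz, one_pow, one_mul, hden]
  have h1 : ((1:ℝ)) ≤ ((k:ℝ)+1)^3 := by
    have hk : (0:ℝ) ≤ (k:ℝ) := Nat.cast_nonneg k
    exact one_le_pow₀ (by linarith)
  have h2 : ‖q‖^((n+1)*(k+1)) ≤ ‖q‖^(n+1+k) := by
    refine pow_le_pow_of_le_one (norm_nonneg q) hq.le ?_
    have hkk : k ≤ k*(n+1) := Nat.le_mul_of_pos_right k (Nat.succ_pos n)
    calc n+1+k ≤ n+1 + k*(n+1) := by omega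
    _ = (n+1)*(k+1) := by ring
  have h3 : (0:ℝ) < ((k:ℝ)+1)^3 := by positivity
  calc ‖q‖^((n+1)*(k+1)) / ((k:ℝ)+1)^3 ≤ ‖q‖^((n+1)*(k+1)) :=
    div_le_self (by positivity) h1
  _ ≤ ‖q‖^(n+1+k) := h2
  _ = ‖q‖^(n+1) * ‖q‖^k := by rw [pow_add]

lemma hasSum_inner (hq : ‖q‖ < 1) {z : ℂ} (hz : ‖z‖ = 1) :
    HasSum (fun n : ℕ => Li3 (q^(n+1) * z))
      (∑' p : ℕ×ℕ, z^(p.2+1) * q^((p.1+1)*(p.2+1)) / ((p.2:ℂ)+1)^3) := by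
  refine HasSum.prod_fiberwise (summable_F hq hz).hasSum fun n => ?_
  have hle : ‖q^(n+1) * z‖ ≤ 1 := by
    rw [norm_mul, hz, mul_one, norm_pow]
    exact pow_le_one₀ (norm_nonneg q) hq.le
  refine (hasSum_Li3 hle).congr_fun fun k => ?_
  show z ^ (k+1) * q^((n+1)*(k+1)) / ((k:ℂ)+1)^3 = (q^(n+1)*z)^(k+1) / ((k:ℂ)+1)^3
  rw [mul_pow, ← pow_mul]
  ring

end qseries

lemma om_def : Complex.exp (Real.pi*Complex.I/3) = om := rfl


set_option maxHeartbeats 2000000 in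
theorem stmt8 (τ : ℂ) (hτ : 0 < τ.im) :
    Summable (fun n : ℕ => (∑ m ∈ (n+1).divisors, (psi m : ℂ) / (m:ℂ)^3) *
      Complex.exp (2*Real.pi*Complex.I*τ)^(n+1)) ∧
    -4*(2*Real.pi*Complex.I*τ)^3 +
      (∑' n : ℕ, (∑ m ∈ (n+1).divisors, (psi m : ℂ) / (m:ℂ)^3) *
        Complex.exp (2*Real.pi*Complex.I*τ)^(n+1)) =
    -48 * (24 * eLi3 τ (Complex.exp (Real.pi*Complex.I/3))
        + 21 * eLi3 τ (Complex.exp (Real.pi*Complex.I/3)^2)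
        + 8 * eLi3 τ (-1)
        + 7 * eLi3 τ 1)
      + 80 * Real.pi^3 * Complex.I * τ - 16 * (zeta3 : ℂ) := by
  have hq : ‖Complex.exp (2*Real.pi*Complex.I*τ)‖ < 1 := by
    rw [Complex.norm_exp]
    rw [Real.exp_lt_one_iff]
    have : (2*(Real.pi:ℂ)*Complex.I*τ).re = -(2*Real.pi*τ.im) := by
      simp [Complex.mul_re, Complex.mul_im]
      try ring
    rw [this]
    have := Real.pi_pos
    nlinarith
  -- norms
  have nom : ‖om‖ = 1 := norm_om
  have nomi : ‖om⁻¹‖ = 1 := by rw [norm_inv, nom]; norm_num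
  have nom2 : ‖om^2‖ = 1 := by rw [norm_pow, nom]; norm_num
  have nom2i : ‖(om^2)⁻¹‖ = 1 := by rw [norm_inv, nom2]; norm_num
  have nneg : ‖(-1:ℂ)‖ = 1 := by simp
  have none' : ‖(1:ℂ)‖ = 1 := by simp
  -- inner double sums
  have h_om := hasSum_inner hq nom
  have h_omi := hasSum_inner hq nomi
  have h_om2 := hasSum_inner hq nom2
  have h_om2i := hasSum_inner hq nom2i
  have h_neg := hasSum_inner hq nneg
  have h_one := hasSum_inner hq none'
  -- the combined product-indexed sum
  have hF_om := (summable_F hq nom).hasSum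
  have hF_omi := (summable_F hq nomi).hasSum
  have hF_om2 := (summable_F hq nom2).hasSum
  have hF_om2i := (summable_F hq nom2i).hasSum
  have hF_neg := (summable_F hq nneg).hasSum
  have hF_one := (summable_F hq none').hasSum
  have Hbig := ((((hF_om.add hF_omi).mul_left 24).add ((hF_om2.add hF_om2i).mul_left 21)).add
    (((hF_neg.add hF_neg).mul_left 8).add ((hF_one.add hF_one).mul_left 7))).mul_left (-48)
  -- identify with the divisor sum function
  have hGfun : HasSum (fun p : ℕ×ℕ =>
      (psi (p.2+1) : ℂ)/((p.2:ℂ)+1)^3 * Complex.exp (2*Real.pi*Complex.I*τ)^((p.1+1)*(p.2+1)))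
      (-48 * ((24 * ((∑' p : ℕ×ℕ, om^(p.2+1) * Complex.exp (2*Real.pi*Complex.I*τ)^((p.1+1)*(p.2+1)) / ((p.2:ℂ)+1)^3)
            + (∑' p : ℕ×ℕ, (om⁻¹)^(p.2+1) * Complex.exp (2*Real.pi*Complex.I*τ)^((p.1+1)*(p.2+1)) / ((p.2:ℂ)+1)^3))
        + 21 * ((∑' p : ℕ×ℕ, (om^2)^(p.2+1) * Complex.exp (2*Real.pi*Complex.I*τ)^((p.1+1)*(p.2+1)) / ((p.2:ℂ)+1)^3)
            + (∑' p : ℕ×ℕ, ((om^2)⁻¹)^(p.2+1) * Complex.exp (2*Real.pi*Complex.I*τ)^((p.1+1)*(p.2+1)) / ((p.2:ℂ)+1)^3)))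
        + (8 * ((∑' p : ℕ×ℕ, (-1:ℂ)^(p.2+1) * Complex.exp (2*Real.pi*Complex.I*τ)^((p.1+1)*(p.2+1)) / ((p.2:ℂ)+1)^3)
            + (∑' p : ℕ×ℕ, (-1:ℂ)^(p.2+1) * Complex.exp (2*Real.pi*Complex.I*τ)^((p.1+1)*(p.2+1)) / ((p.2:ℂ)+1)^3))
        + 7 * ((∑' p : ℕ×ℕ, (1:ℂ)^(p.2+1) * Complex.exp (2*Real.pi*Complex.I*τ)^((p.1+1)*(p.2+1)) / ((p.2:ℂ)+1)^3)
            + (∑' p : ℕ×ℕ, (1:ℂ)^(p.2+1) * Complex.exp (2*Real.pi*Complex.I*τ)^((p.1+1)*(p.2+1)) / ((p.2:ℂ)+1)^3))))) := by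
    refine Hbig.congr_fun fun p => ?_
    rw [psi_eq (p.2+1)]
    ring
  -- regroup along fibers of multiplication
  set q : ℂ := Complex.exp (2*Real.pi*Complex.I*τ) with hqdef
  set V : ℂ := (-48 * ((24 * ((∑' p : ℕ×ℕ, om^(p.2+1) * q^((p.1+1)*(p.2+1)) / ((p.2:ℂ)+1)^3)
            + (∑' p : ℕ×ℕ, (om⁻¹)^(p.2+1) * q^((p.1+1)*(p.2+1)) / ((p.2:ℂ)+1)^3))
        + 21 * ((∑' p : ℕ×ℕ, (om^2)^(p.2+1) * q^((p.1+1)*(p.2+1)) / ((p.2:ℂ)+1)^3)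
            + (∑' p : ℕ×ℕ, ((om^2)⁻¹)^(p.2+1) * q^((p.1+1)*(p.2+1)) / ((p.2:ℂ)+1)^3)))
        + (8 * ((∑' p : ℕ×ℕ, (-1:ℂ)^(p.2+1) * q^((p.1+1)*(p.2+1)) / ((p.2:ℂ)+1)^3)
            + (∑' p : ℕ×ℕ, (-1:ℂ)^(p.2+1) * q^((p.1+1)*(p.2+1)) / ((p.2:ℂ)+1)^3))
        + 7 * ((∑' p : ℕ×ℕ, (1:ℂ)^(p.2+1) * q^((p.1+1)*(p.2+1)) / ((p.2:ℂ)+1)^3)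
            + (∑' p : ℕ×ℕ, (1:ℂ)^(p.2+1) * q^((p.1+1)*(p.2+1)) / ((p.2:ℂ)+1)^3))))) with hVdef
  have hGfun' : HasSum (fun p : ℕ×ℕ => if p.1 = 0 ∨ p.2 = 0 then 0
      else (psi p.2 : ℂ)/(p.2:ℂ)^3 * q^(p.1*p.2)) V := by
    have hinj : Function.Injective (fun p : ℕ×ℕ => (p.1+1, p.2+1)) := by
      intro a b hab
      simp only [Prod.mk.injEq] at hab
      exact Prod.ext (by omega) (by omega)
    refine (Function.Injective.hasSum_iff hinj ?_).mp ?_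
    · intro x hx
      rcases x with ⟨x1, x2⟩
      rcases Nat.eq_zero_or_pos x1 with rfl | h1
      · rw [if_pos (Or.inl rfl)]
      rcases Nat.eq_zero_or_pos x2 with rfl | h2
      · rw [if_pos (Or.inr rfl)]
      exact absurd ⟨(x1-1, x2-1), by simp only [Prod.mk.injEq]; omega⟩ hx
    · refine hGfun.congr_fun fun p => ?_
      simp only [Function.comp_apply]
      rw [if_neg (by omega)]
      push_cast
      ring
  have hfib := hGfun'.tsum_fiberwise (fun p : ℕ×ℕ => p.1 * p.2)
  have hc : HasSum (fun N : ℕ => (∑ m ∈ N.divisors, (psi m : ℂ)/(m:ℂ)^3) * q^N) V := by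
    refine hfib.congr_fun fun N => ?_
    rcases Nat.eq_zero_or_pos N with rfl | hN
    · rw [Nat.divisors_zero]
      simp only [Finset.sum_empty, zero_mul]
      have hzero : ∀ b : ((fun p : ℕ×ℕ => p.1 * p.2) ⁻¹' {0}),
          (if (b:ℕ×ℕ).1 = 0 ∨ (b:ℕ×ℕ).2 = 0 then (0:ℂ)
            else (psi (b:ℕ×ℕ).2 : ℂ)/((b:ℕ×ℕ).2:ℂ)^3 * q^((b:ℕ×ℕ).1*(b:ℕ×ℕ).2)) = 0 := by
        rintro ⟨⟨b1, b2⟩, hb⟩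
        simp only [Set.mem_preimage, Set.mem_singleton_iff, Nat.mul_eq_zero] at hb
        exact if_pos hb
      rw [tsum_congr hzero, tsum_zero]
    · rw [show (fun p : ℕ×ℕ => p.1 * p.2) ⁻¹' {N} = ↑(N.divisorsAntidiagonal) by
        ext p; simp [Nat.mem_divisorsAntidiagonal, hN.ne']]
      rw [Finset.tsum_subtype' (N.divisorsAntidiagonal)
        (fun p => if p.1 = 0 ∨ p.2 = 0 then (0:ℂ) else (psi p.2 : ℂ)/(p.2:ℂ)^3 * q^(p.1*p.2))]
      have hsum : ∑ p ∈ N.divisorsAntidiagonal,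
          (if p.1 = 0 ∨ p.2 = 0 then (0:ℂ) else (psi p.2 : ℂ)/(p.2:ℂ)^3 * q^(p.1*p.2))
          = ∑ p ∈ N.divisorsAntidiagonal, ((psi p.2 : ℂ)/(p.2:ℂ)^3) * q^N := by
        refine Finset.sum_congr rfl fun p hp => ?_
        obtain ⟨hmul, hN0⟩ := Nat.mem_divisorsAntidiagonal.mp hp
        have h1 : p.1 ≠ 0 := fun h => hN.ne' (by rw [← hmul, h, zero_mul])
        have h2 : p.2 ≠ 0 := fun h => hN.ne' (by rw [← hmul, h, mul_zero])
        rw [if_neg (by tauto), hmul]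
      rw [hsum, ← Finset.sum_mul]
      congr 1
      exact (Nat.sum_divisorsAntidiagonal' (f := fun _ j => ((psi j : ℂ)/(j:ℂ)^3))).symm
  have hshift : HasSum (fun n : ℕ => (∑ m ∈ (n+1).divisors, (psi m : ℂ)/(m:ℂ)^3) * q^(n+1)) V :=
    hasSum_shift hc (by simp)
  constructor
  · exact hshift.summable
  rw [hshift.tsum_eq]
  -- expand eLi3 and evaluate
  simp only [eLi3, om_def, inv_neg, inv_one]
  rw [(h_om.add h_omi).tsum_eq, (h_om2.add h_om2i).tsum_eq, (h_neg.add h_neg).tsum_eq,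
    (h_one.add h_one).tsum_eq]
  have hlog1 : Complex.log om = Real.pi*Complex.I/3 := by
    rw [← om_def]
    refine Complex.log_exp ?_ ?_ <;>
    · have h3 : (Real.pi*Complex.I/3 : ℂ).im = Real.pi/3 := by
        simp [Complex.div_im]
      rw [h3]
      have := Real.pi_pos
      linarith
  have hlog2 : Complex.log (om^2) = 2*Real.pi*Complex.I/3 := by
    rw [show om^2 = Complex.exp (2*Real.pi*Complex.I/3) by
      rw [← om_def, ← Complex.exp_nat_mul]; congr 1; push_cast; ring]
    refine Complex.log_exp ?_ ?_ <;>
    · have h3 : (2*Real.pi*Complex.I/3 : ℂ).im = 2*Real.pi/3 := by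
        simp [Complex.div_im]
      rw [h3]
      have := Real.pi_pos
      linarith
  rw [hlog1, hlog2, Complex.log_neg_one, Complex.log_one]
  rw [hVdef]
  linear_combination (48:ℂ) * constant_sum
    + ((544/9)*(Real.pi:ℂ)^3*Complex.I - 80*(Real.pi:ℂ)^3*Complex.I*τ) * Complex.I_sq
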